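/- There exists a universal constant C such that the following holds for S = 𝖱 and for S = 𝖱⁺. For every nonempty finite family of monomials over S in a finite variable set V, given by coefficients c_j ∈ S and exponent vectors e_j : V → ℕ for j in a nonempty finite index set J, let s := Σ_{j ∈ J} ( 1 + Σ_{v ∈ V} e_j(v) ). Then there exists a (weakest) width-3 ABP over S of length at most C · s computing the function S^V → S that maps an assignment a to min_{j ∈ J} ( c_j + Σ_{v ∈ V} e_j(v) · a(v) ) (all arithmetic in ℝ ∪ {∞}, respectively ℝ≥0 ∪ {∞}, with ∞ absorbing under addition). In particular, width-3 ABPs over min-plus semirings are universal: every min-plus polynomial is computed by some width-3 ABP. -/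

import Mathlib

open MvPolynomial

/-- `𝖱`: the min-plus semiring on `ℝ ∪ {∞}`. -/
abbrev TR : Type := Tropical (WithTop ℝ)

/-- `𝖱⁺`: the min-plus semiring on `ℝ≥0 ∪ {∞}`. -/
abbrev TRP : Type := Tropical (WithTop NNReal)

/-- In a (weakest) ABP every matrix entry is a single variable or a constant. -/
def IsABP {S V : Type} [CommSemiring S] {w L : ℕ}
    (M : Fin L → Matrix (Fin w) (Fin w) (MvPolynomial V S)) : Prop :=
  ∀ l i j, (∃ v, M l i j = X v) ∨ (∃ c, M l i j = C c)

/-- The function computed by a (weakest) width-`w` ABP: the evaluation at an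
assignment of the `(1,1)`-entry of the min-plus matrix product `M₁ ⋯ M_L`. -/
noncomputable def ABPeval {S V : Type} [CommSemiring S] {w L : ℕ} [NeZero w]
    (M : Fin L → Matrix (Fin w) (Fin w) (MvPolynomial V S)) (a : V → S) : S :=
  eval a ((List.ofFn M).prod 0 0)

section Aux

variable {R : Type} [CommSemiring R]

/-- entry matrix -/
def EmM (c : R) : Matrix (Fin 3) (Fin 3) R := !![1,c,0;0,0,0;0,0,1]
/-- variable matrix -/
def VmM (x : R) : Matrix (Fin 3) (Fin 3) R := !![1,0,0;0,x,0;0,0,1]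
/-- exit matrix -/
def XmM : Matrix (Fin 3) (Fin 3) R := !![1,0,0;0,0,1;0,0,1]
/-- final matrix -/
def FmM : Matrix (Fin 3) (Fin 3) R := !![0,0,0;0,0,0;1,0,0]

lemma vm_prod (xs : List R) :
    (xs.map VmM).prod = !![1,0,0;0,xs.prod,0;0,0,1] := by
  induction xs with
  | nil => simp [Matrix.one_fin_three]
  | cons x xs ih =>
      rw [List.map_cons, List.prod_cons, ih, List.prod_cons, VmM, Matrix.mul_fin_three]
      norm_num

/-- one block of layers -/
def blockM (c : R) (xs : List R) : List (Matrix (Fin 3) (Fin 3) R) :=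
  EmM c :: (xs.map VmM ++ [XmM])

lemma block_prod (c : R) (xs : List R) :
    (blockM c xs).prod = !![1,0,c*xs.prod;0,0,0;0,0,1] := by
  rw [blockM, List.prod_cons, List.prod_append, vm_prod, List.prod_singleton,
    EmM, XmM, Matrix.mul_fin_three, Matrix.mul_fin_three]
  norm_num

lemma full_prod (ms : List (R × List R)) :
    ((ms.flatMap (fun (p : R × List R) => blockM p.1 p.2)) ++ [FmM]).prod =
      !![(ms.map (fun p => p.1 * p.2.prod)).sum,0,0;0,0,0;1,0,0] := by
  induction ms with
  | nil => simp [FmM]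
  | cons p ms ih =>
      rw [List.flatMap_cons, List.append_assoc, List.prod_append, ih, block_prod,
        List.map_cons, List.sum_cons, Matrix.mul_fin_three]
      norm_num [add_comm]

theorem generalABP (S : Type) [CommSemiring S] (V J : Type) [Fintype V] [Fintype J] [Nonempty J]
    (c : J → S) (e : J → V → ℕ) :
    ∃ L : ℕ, L ≤ 3 * ∑ j : J, (1 + ∑ v : V, e j v) ∧
      ∃ M : Fin L → Matrix (Fin 3) (Fin 3) (MvPolynomial V S),
        IsABP M ∧ ∀ a : V → S, ABPeval M a = ∑ j : J, c j * ∏ v : V, a v ^ e j v := by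
  classical
  obtain ⟨j0⟩ := ‹Nonempty J›
  set xsl : J → List (MvPolynomial V S) :=
    fun j => (Finset.univ : Finset V).toList.flatMap
      (fun v => List.replicate (e j v) (X v)) with hxsl
  set ms : List (MvPolynomial V S × List (MvPolynomial V S)) :=
    (Finset.univ : Finset J).toList.map (fun j => (C (c j), xsl j)) with hms
  set layers : List (Matrix (Fin 3) (Fin 3) (MvPolynomial V S)) :=
    (ms.flatMap (fun p => blockM p.1 p.2)) ++ [FmM] with hlayers
  have hxlen : ∀ j, (xsl j).length = ∑ v : V, e j v := by
    intro j
    rw [hxsl, List.length_flatMap]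
    simp only [Function.comp_def, List.length_replicate]
    rw [Finset.sum_map_toList]
  have hABP : ∀ A ∈ layers, ∀ i j : Fin 3,
      (∃ v, A i j = X v) ∨ (∃ c', A i j = C c') := by
    intro A hA i j
    rw [hlayers] at hA
    rcases List.mem_append.1 hA with h | h
    · rcases List.mem_flatMap.1 h with ⟨p, hp, hAmem⟩
      rw [hms] at hp
      rcases List.mem_map.1 hp with ⟨k, _, rfl⟩
      rcases List.mem_cons.1 hAmem with rfl | hAmem
      · fin_cases i <;> fin_cases j <;> simp only [EmM] <;>
          first
            | exact Or.inr ⟨1, (map_one (C (σ := V) (R := S))).symm⟩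
            | exact Or.inr ⟨0, (map_zero (C (σ := V) (R := S))).symm⟩
            | exact Or.inr ⟨c k, rfl⟩
      · rcases List.mem_append.1 hAmem with hAmem | hAmem
        · rcases List.mem_map.1 hAmem with ⟨x, hx, rfl⟩
          rcases List.mem_flatMap.1 hx with ⟨v, _, hv⟩
          rcases List.eq_of_mem_replicate hv with rfl
          fin_cases i <;> fin_cases j <;> simp only [VmM] <;>
            first
              | exact Or.inr ⟨1, (map_one (C (σ := V) (R := S))).symm⟩
              | exact Or.inr ⟨0, (map_zero (C (σ := V) (R := S))).symm⟩
              | exact Or.inl ⟨v, rfl⟩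
        · rcases List.mem_singleton.1 hAmem with rfl
          fin_cases i <;> fin_cases j <;> simp only [XmM] <;>
            first
              | exact Or.inr ⟨1, (map_one (C (σ := V) (R := S))).symm⟩
              | exact Or.inr ⟨0, (map_zero (C (σ := V) (R := S))).symm⟩
    · rcases List.mem_singleton.1 h with rfl
      fin_cases i <;> fin_cases j <;> simp only [FmM] <;>
        first
          | exact Or.inr ⟨1, (map_one (C (σ := V) (R := S))).symm⟩
          | exact Or.inr ⟨0, (map_zero (C (σ := V) (R := S))).symm⟩
  refine ⟨layers.length, ?_, fun l => layers.get l, ?_, ?_⟩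
  · -- length bound
    have h1 : layers.length = (∑ j : J, (2 + ∑ v : V, e j v)) + 1 := by
      rw [hlayers, List.length_append, List.length_flatMap, hms, List.map_map]
      simp only [List.length_singleton, List.length_cons, List.length_nil]
      congr 1
      rw [Finset.sum_map_toList]
      refine Finset.sum_congr rfl (fun j _ => ?_)
      simp only [Function.comp_apply, blockM, List.length_cons, List.length_append,
        List.length_map, List.length_singleton, List.length_nil, hxlen j]
      omega
    have h2 : (1:ℕ) ≤ ∑ j : J, (1 + ∑ v : V, e j v) :=
      le_trans (Nat.le_add_right 1 _)
        (Finset.single_le_sum (f := fun j => 1 + ∑ v : V, e j v)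
          (fun i _ => Nat.zero_le _) (Finset.mem_univ j0))
    have h3 : (∑ j : J, (2 + ∑ v : V, e j v)) ≤ 2 * ∑ j : J, (1 + ∑ v : V, e j v) := by
      rw [Finset.mul_sum]
      exact Finset.sum_le_sum (fun j _ => by omega)
    omega
  · -- IsABP
    intro l i j
    exact hABP _ (List.get_mem layers l) i j
  · -- evaluation
    intro a
    have hofn : List.ofFn (fun l => layers.get l) = layers := List.ofFn_get layers
    rw [ABPeval, hofn, hlayers, full_prod]
    have h00 : (!![(ms.map (fun p => p.1 * p.2.prod)).sum,0,0;0,0,0;1,0,0] :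
        Matrix (Fin 3) (Fin 3) (MvPolynomial V S)) 0 0
        = (ms.map (fun p => p.1 * p.2.prod)).sum := by norm_num
    rw [h00, hms, List.map_map, Finset.sum_map_toList, map_sum]
    refine Finset.sum_congr rfl (fun j _ => ?_)
    have hpoly : (xsl j).prod = ∏ v : V, (X v : MvPolynomial V S) ^ e j v := by
      rw [hxsl]
      show ((Finset.univ : Finset V).toList.map
        (fun v => List.replicate (e j v) (X v))).flatten.prod = _
      rw [List.prod_flatten, List.map_map]
      simp only [Function.comp_def, List.prod_replicate]
      rw [Finset.prod_map_toList]
    simp [Function.comp, hpoly, eval_prod]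

end Aux

theorem stmt9 : ∃ C : ℕ,
    (∀ (V J : Type) [Fintype V] [Fintype J] [Nonempty J]
      (c : J → TR) (e : J → V → ℕ),
      ∃ L : ℕ, L ≤ C * ∑ j : J, (1 + ∑ v : V, e j v) ∧
        ∃ M : Fin L → Matrix (Fin 3) (Fin 3) (MvPolynomial V TR),
          IsABP M ∧
          ∀ a : V → TR, ABPeval M a = ∑ j : J, c j * ∏ v : V, a v ^ e j v) ∧
    (∀ (V J : Type) [Fintype V] [Fintype J] [Nonempty J]
      (c : J → TRP) (e : J → V → ℕ),
      ∃ L : ℕ, L ≤ C * ∑ j : J, (1 + ∑ v : V, e j v) ∧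
        ∃ M : Fin L → Matrix (Fin 3) (Fin 3) (MvPolynomial V TRP),
          IsABP M ∧
          ∀ a : V → TRP, ABPeval M a = ∑ j : J, c j * ∏ v : V, a v ^ e j v) := by
  exact ⟨3, fun V J _ _ _ c e => generalABP TR V J c e,
            fun V J _ _ _ c e => generalABP TRP V J c e⟩
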